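/- Let K be a finite field and let x ∈ K with x ≠ 0. Then the x-monomial minimal solution over K is irreducible. -/

import Mathlib

namespace Quiddity

variable {A : Type*} [CommRing A]

/-- `mMat [a₁, …, aₙ]` is the matrix product `[[aₙ,-1],[1,0]] ⋯ [[a₁,-1],[1,0]]`. -/
def mMat : List A → Matrix (Fin 2) (Fin 2) A
  | [] => 1
  | a :: t => mMat t * !![a, -1; 1, 0]

/-- Continuant: `cont [] = K₀ = 1`, `cont [a] = K₁(a) = a`, and the continuant recursion. -/
def cont : List A → A
  | [] => 1
  | [a] => a
  | a :: b :: t => a * cont (b :: t) - cont t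

/-- A λ-quiddity is a tuple with `Mₙ(a₁,…,aₙ) = ± Id`. -/
def IsQuiddity (l : List A) : Prop := mMat l = 1 ∨ mMat l = -1

/-- The sum `⊕` of two tuples (meaningful for tuples of length ≥ 2):
`(a₁,…,aₘ) ⊕ (b₁,…,b_l) = (a₁+b_l, a₂,…,a_{m−1}, aₘ+b₁, b₂,…,b_{l−1})`. -/
def oplus (la lb : List A) : List A :=
  (la.headD 0 + lb.getLastD 0) ::
    (la.tail.dropLast ++ (la.getLastD 0 + lb.headD 0) :: lb.tail.dropLast)

/-- Two tuples are equivalent if one is a cyclic permutation of the other or of its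
reversal. -/
def TupleEquiv (l l' : List A) : Prop :=
  List.IsRotated l l' ∨ List.IsRotated l.reverse l'

/-- A λ-quiddity `c` is reducible if `c ∼ a ⊕ b` with `b` a λ-quiddity and both of size ≥ 3. -/
def QuiddityReducible (c : List A) : Prop :=
  ∃ a b : List A, 3 ≤ a.length ∧ 3 ≤ b.length ∧ IsQuiddity b ∧ TupleEquiv c (oplus a b)

/-- `(a, b, a, b, …, a, b)` with `k` repetitions of the pair `(a, b)` (size `2k`). -/
def dynList : ℕ → A → A → List A
  | 0, _, _ => []
  | k + 1, a, b => a :: b :: dynList k a b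

/-- `(u, v, v, u, v, v, …, u, v, v)` with `k` repetitions of the block `(u, v, v)`
(size `3k`). -/
def triList : ℕ → A → A → List A
  | 0, _, _ => []
  | k + 1, a, b => a :: b :: b :: triList k a b

end Quiddity

open Quiddity

namespace Quiddity

variable {A : Type*} [CommRing A]

section Aux

def Rm (a : A) : Matrix (Fin 2) (Fin 2) A := !![a, -1; 1, 0]
def Rm' (a : A) : Matrix (Fin 2) (Fin 2) A := !![0, 1; -1, a]

lemma Rm'_Rm (a : A) : Rm' a * Rm a = 1 := by
  simp [Rm, Rm', Matrix.mul_fin_two, Matrix.one_fin_two]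

lemma Rm_Rm' (a : A) : Rm a * Rm' a = 1 := by
  simp [Rm, Rm', Matrix.mul_fin_two, Matrix.one_fin_two]

lemma Rm'_Rm_cancel (a : A) (Z : Matrix (Fin 2) (Fin 2) A) : Rm' a * (Rm a * Z) = Z := by
  rw [← Matrix.mul_assoc, Rm'_Rm, Matrix.one_mul]

lemma Rm_Rm'_cancel (a : A) (Z : Matrix (Fin 2) (Fin 2) A) : Rm a * (Rm' a * Z) = Z := by
  rw [← Matrix.mul_assoc, Rm_Rm', Matrix.one_mul]

lemma mMat_cons (a : A) (t : List A) : mMat (a :: t) = mMat t * Rm a := rfl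

lemma mMat_append (u v : List A) : mMat (u ++ v) = mMat v * mMat u := by
  induction u with
  | nil => simp [mMat]
  | cons a t ih => rw [List.cons_append, mMat_cons, mMat_cons, ih, Matrix.mul_assoc]

lemma mMat_replicate (x : A) (k : ℕ) : mMat (List.replicate k x) = (Rm x) ^ k := by
  induction k with
  | zero => rfl
  | succ k ih => rw [List.replicate_succ, mMat_cons, ih, ← pow_succ]

lemma pow_entries (x : A) (k : ℕ) :
    ((Rm x) ^ k) 0 1 = -((Rm x) ^ k) 1 0 ∧
      ((Rm x) ^ k) 0 0 = x * ((Rm x) ^ k) 1 0 + ((Rm x) ^ k) 1 1 := by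
  induction k with
  | zero => simp
  | succ k ih =>
    obtain ⟨h1, h2⟩ := ih
    rw [pow_succ]
    simp only [Rm] at h1 h2 ⊢
    constructor
    · simp [Matrix.mul_apply, Fin.sum_univ_two]
      linear_combination -h2
    · simp [Matrix.mul_apply, Fin.sum_univ_two]
      linear_combination x * h2 + h1

lemma decomp (l : List A) (h : 2 ≤ l.length) :
    l = l.headD 0 :: (l.tail.dropLast ++ [l.getLastD 0]) := by
  match l, h with
  | a :: c :: t, _ =>
    have hne : (c :: t) ≠ [] := by simp
    simp only [List.headD_cons, List.tail_cons]
    congr 1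
    have h1 : (a :: c :: t).getLastD 0 = (c :: t).getLast hne := by
      rw [List.getLastD_eq_getLast?, List.getLast?_cons_cons,
        List.getLast?_eq_getLast hne, Option.getD_some]
    rw [h1, List.dropLast_append_getLast hne]

end Aux

end Quiddity

/-- over a finite field, the `x`-monomial minimal solution is irreducible
for every `x ≠ 0`. -/
theorem stmt6 (K : Type*) [Field K] [Fintype K] (x : K) (hx : x ≠ 0)
    (n : ℕ) (hn : 0 < n)
    (hq : IsQuiddity (List.replicate n x))
    (hmin : ∀ k, 0 < k → IsQuiddity (List.replicate k x) → n ≤ k) :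
    ¬ QuiddityReducible (List.replicate n x) := by
  rintro ⟨a, b, ha, hb, hqb, hequiv⟩
  have hoplus : oplus a b = List.replicate n x := by
    rcases hequiv with ⟨k, hk⟩ | ⟨k, hk⟩
    · rw [← hk, List.rotate_replicate]
    · rw [← hk, List.reverse_replicate, List.rotate_replicate]
  have hall : ∀ y ∈ oplus a b, y = x := fun y hy => List.eq_of_mem_replicate (hoplus ▸ hy)
  set r := b.headD 0 with hrdef
  set s := b.getLastD 0 with hsdef
  have htb : b.tail.dropLast = List.replicate b.tail.dropLast.length x := by
    apply List.eq_replicate_of_mem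
    intro y hy
    apply hall
    exact List.mem_cons_of_mem _ (List.mem_append_right _ (List.mem_cons_of_mem _ hy))
  set i := a.tail.dropLast.length with hidef
  set j := b.tail.dropLast.length with hjdef
  have hia : i = a.length - 2 := by
    rw [hidef, List.length_dropLast, List.length_tail]; omega
  have hjb : j = b.length - 2 := by
    rw [hjdef, List.length_dropLast, List.length_tail]; omega
  have hnlen : n = i + j + 2 := by
    have h := congrArg List.length hoplus
    simp only [oplus, List.length_cons, List.length_append, List.length_replicate] at h
    omega
  have hbdec : b = r :: (b.tail.dropLast ++ [s]) := decomp b (by omega)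
  have hmb : mMat b = Rm s * (Rm x) ^ j * Rm r := by
    conv_lhs => rw [hbdec]
    rw [mMat_cons, mMat_append, htb, mMat_replicate, mMat_cons]
    show mMat [] * Rm s * (Rm x) ^ j * Rm r = _
    rw [show (mMat [] : Matrix (Fin 2) (Fin 2) K) = 1 from rfl, Matrix.one_mul]
  obtain ⟨δ, hδ, hB⟩ : ∃ δ : K, (δ = 1 ∨ δ = -1) ∧ Rm s * (Rm x) ^ j * Rm r = δ • 1 := by
    rcases hqb with h | h
    · exact ⟨1, Or.inl rfl, by rw [← hmb, h, one_smul]⟩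
    · exact ⟨-1, Or.inr rfl, by rw [← hmb, h]; simp⟩
  obtain ⟨η, hη, hN⟩ : ∃ η : K, (η = 1 ∨ η = -1) ∧ (Rm x) ^ n = η • 1 := by
    rcases hq with h | h
    · exact ⟨1, Or.inl rfl, by rw [← mMat_replicate, h, one_smul]⟩
    · exact ⟨-1, Or.inr rfl, by rw [← mMat_replicate, h]; simp⟩
  have hXj : (Rm x) ^ j = δ • (Rm' s * Rm' r) := by
    have h := congrArg (fun M => Rm' s * M * Rm' r) hB
    simp only [Matrix.mul_assoc] at h
    rw [Rm'_Rm_cancel, Rm_Rm', Matrix.mul_one] at h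
    rw [h, smul_mul_assoc, Matrix.one_mul, mul_smul_comm]
  have hXi : (Rm x) ^ i = (η * δ) • (Rm r * (Rm s * (Rm' x * Rm' x))) := by
    have e1 : (Rm x) ^ i * ((Rm x) ^ 2 * (Rm x) ^ j) = η • 1 := by
      rw [← pow_add, ← pow_add, show i + (2 + j) = n by omega, hN]
    rw [hXj] at e1
    have e2 := congrArg (fun M => M * (Rm r * (Rm s * (Rm' x * Rm' x)))) e1
    simp only [Matrix.mul_assoc, mul_smul_comm, smul_mul_assoc, Matrix.one_mul,
      Matrix.mul_one, Rm'_Rm_cancel, Rm_Rm'_cancel, Rm_Rm', Rm'_Rm, pow_two] at e2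
    -- e2 should now read : δ • ((Rm x) ^ i) = η • (Rm r * (Rm s * (Rm' x * Rm' x)))
    have hδ2 : δ * δ = 1 := by rcases hδ with h | h <;> rw [h] <;> ring
    calc (Rm x) ^ i = (δ * δ) • (Rm x) ^ i := by rw [hδ2, one_smul]
      _ = δ • (δ • (Rm x) ^ i) := by rw [smul_smul]
      _ = δ • (η • (Rm r * (Rm s * (Rm' x * Rm' x)))) := by rw [e2]
      _ = (η * δ) • (Rm r * (Rm s * (Rm' x * Rm' x))) := by rw [smul_smul, mul_comm]
  have hG : (Rm r * (Rm s * (Rm' x * Rm' x)) : Matrix (Fin 2) (Fin 2) K) =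
      !![1 - r*s + r*x, r*s*x - x - r*x*x + r; x - s, s*x - x*x + 1] := by
    ext ii jj
    fin_cases ii <;> fin_cases jj <;>
      simp [Rm, Rm', Matrix.mul_apply, Fin.sum_univ_two] <;> ring
  rw [hG] at hXi
  obtain ⟨hp1, hp2⟩ := pow_entries x i
  rw [hXi] at hp1 hp2
  simp only [Matrix.smul_apply, smul_eq_mul] at hp1 hp2
  norm_num at hp1 hp2
  have key1 : r * (x - s) = 0 := by
    rcases hη with h | h <;> rcases hδ with h' | h' <;> rw [h, h'] at hp2 <;>
      first | linear_combination hp2 | linear_combination -hp2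
  have key2 : r * (s*x - x*x + 1) = s := by
    rcases hη with h | h <;> rcases hδ with h' | h' <;> rw [h, h'] at hp1 <;>
      first | linear_combination hp1 | linear_combination -hp1
  rcases mul_eq_zero.mp key1 with hr0 | hsx
  · -- r = 0, hence s = 0
    have hs0 : s = 0 := by linear_combination -key2 + (s*x - x*x + 1) * hr0
    have hRR : (Rm' (0:K) * Rm' 0 : Matrix (Fin 2) (Fin 2) K) = -1 := by
      ext ii jj
      fin_cases ii <;> fin_cases jj <;>
        simp [Rm', Matrix.mul_apply, Fin.sum_univ_two]
    rw [hr0, hs0, hRR] at hXj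
    have hquid : IsQuiddity (List.replicate j x) := by
      rw [IsQuiddity, mMat_replicate, hXj]
      rcases hδ with h | h <;> rw [h] <;> simp
    have := hmin j (by omega) hquid
    omega
  · -- s = x, hence r = x
    have hs : s = x := by linear_combination -hsx
    have hr : r = x := by
      rw [hs] at key2
      linear_combination key2
    rw [hr, hs] at hB
    have hquid : IsQuiddity (List.replicate (j + 2) x) := by
      rw [IsQuiddity, mMat_replicate]
      have hpow : (Rm x) ^ (j + 2) = Rm x * (Rm x) ^ j * Rm x := by
        rw [show j + 2 = 1 + j + 1 by omega, pow_add, pow_add, pow_one]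
      rw [hpow, hB]
      rcases hδ with h | h <;> rw [h] <;> simp
    have := hmin (j + 2) (by omega) hquid
    omega
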